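/- Let 1 ≤ q ≤ p < ∞ with conjugate exponent r of q, E a real Banach space, h ∈ L^p(I,E), and let the kernel k : I×I → 𝓛(E) satisfy (κ1)–(κ3). Define K : L^q(I,E) → L^p(I,E) by K(w)(t) := h(t) + ∫₀ᵀ k(t,s)w(s) ds. If C ⊆ E is norm-compact, (w_n) ⊆ L^q(I,E) is a sequence with w_n(t) ∈ C for a.e. t ∈ I and every n, and w_n ⇀ w weakly in L^q(I,E), then K(w_n) → K(w) in the norm of L^p(I,E). -/

import Mathlib

open MeasureTheory Filter Topology Set
open scoped ENNReal NNReal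

noncomputable section

/-- The Lebesgue measure restricted to the interval `I = [0, T]`. -/
abbrev μI (T : ℝ) : MeasureTheory.Measure ℝ := MeasureTheory.volume.restrict (Set.Icc 0 T)

/-- The weak topology on a real normed space, i.e. the topology induced by all continuous
linear functionals. -/
def weakTop (X : Type*) [NormedAddCommGroup X] [NormedSpace ℝ X] : TopologicalSpace X :=
  TopologicalSpace.induced (fun (x : X) (φ : X →L[ℝ] ℝ) => φ x) Pi.topologicalSpace

/-- Weak convergence of a sequence in a real normed space. -/
def WeakConv {X : Type*} [NormedAddCommGroup X] [NormedSpace ℝ X] (w : ℕ → X) (x : X) : Prop :=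
  ∀ φ : X →L[ℝ] ℝ, Tendsto (fun n => φ (w n)) atTop (𝓝 (φ x))

variable {E : Type*} [NormedAddCommGroup E] [NormedSpace ℝ E]
/-- The norm `‖ t ↦ ‖k(t,·)‖_{L^r} ‖_{L^p}` of a kernel `k : I × I → 𝓛(E)`. -/
def kNorm (T : ℝ) (k : ℝ → ℝ → E →L[ℝ] E) (p r : ℝ≥0∞) : ℝ :=
  (eLpNorm (fun t => (eLpNorm (k t) r (μI T)).toReal) p (μI T)).toReal

/-- Kernel conditions (κ1)–(κ3): `k` is strongly measurable on the product, `k(t,·) ∈ L^r` for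
every `t ∈ I`, and `t ↦ ‖k(t,·)‖_{L^r}` belongs to `L^p`. -/
def CondK (T : ℝ) (k : ℝ → ℝ → E →L[ℝ] E) (p r : ℝ≥0∞) : Prop :=
  AEStronglyMeasurable (Function.uncurry k) ((μI T).prod (μI T)) ∧
  (∀ t ∈ Set.Icc (0:ℝ) T, MemLp (k t) r (μI T)) ∧
  MemLp (fun t => (eLpNorm (k t) r (μI T)).toReal) p (μI T)

/-- The Hausdorff measure of noncompactness of `Ω` relative to `E₀`:
the infimum of all `ε > 0` such that `Ω` admits a finite cover by open balls of radius `ε`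
centered in `E₀`. -/
def relMNC (E₀ Ω : Set E) : ℝ :=
  sInf {ε : ℝ | 0 < ε ∧ ∃ s : Finset E, ↑s ⊆ E₀ ∧ Ω ⊆ ⋃ x ∈ s, Metric.ball x ε}

/-! ### Auxiliary lemmas -/

section Aux

variable {α : Type*} [MeasurableSpace α] {μ : MeasureTheory.Measure α}

private lemma aux_aesm_apply {f : α → E →L[ℝ] E} {u : α → E}
    (hf : AEStronglyMeasurable f μ) (hu : AEStronglyMeasurable u μ) :
    AEStronglyMeasurable (fun s => f s (u s)) μ :=
  isBoundedBilinearMap_apply.continuous.comp_aestronglyMeasurable (hf.prodMk hu)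

private lemma aux_integrable_apply {q r : ℝ≥0∞} (hqr : q⁻¹ + r⁻¹ = 1)
    {f : α → E →L[ℝ] E} {u : α → E} (hf : MemLp f r μ) (hu : MemLp u q μ) :
    Integrable (fun s => f s (u s)) μ := by
  rw [← memLp_one_iff_integrable]
  refine ⟨aux_aesm_apply hf.1 hu.1, ?_⟩
  calc eLpNorm (fun s => f s (u s)) 1 μ
      ≤ eLpNorm f r μ * eLpNorm u q μ := by
        have := eLpNorm_le_eLpNorm_mul_eLpNorm_of_nnnorm hf.1 hu.1 (fun A x => A x) 1 (p := r) (q := q) (r := 1)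
          (Eventually.of_forall fun s => by simpa using (f s).le_opNNNorm (u s))
          (hpqr := ⟨by rw [inv_one, ← hqr, add_comm]⟩)
        simpa using this
    _ < ∞ := ENNReal.mul_lt_top hf.2 hu.2

private lemma aux_integral_norm_apply_le {q r : ℝ≥0∞} (hqr : q⁻¹ + r⁻¹ = 1)
    {f : α → E →L[ℝ] E} {u : α → E} (hf : MemLp f r μ) (hu : MemLp u q μ) :
    ∫ s, ‖f s (u s)‖ ∂μ ≤ (eLpNorm f r μ).toReal * (eLpNorm u q μ).toReal := by
  rw [integral_norm_eq_lintegral_enorm (aux_aesm_apply hf.1 hu.1),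
    ← eLpNorm_one_eq_lintegral_enorm, ← ENNReal.toReal_mul]
  refine ENNReal.toReal_mono (ENNReal.mul_ne_top hf.2.ne hu.2.ne) ?_
  have := eLpNorm_le_eLpNorm_mul_eLpNorm_of_nnnorm hf.1 hu.1 (fun A x => A x) 1 (p := r) (q := q) (r := 1)
    (Eventually.of_forall fun s => by simpa using (f s).le_opNNNorm (u s))
    (hpqr := ⟨by rw [inv_one, ← hqr, add_comm]⟩)
  simpa using this

private lemma aux_norm_integral_apply_le {q r : ℝ≥0∞} (hqr : q⁻¹ + r⁻¹ = 1)
    {f : α → E →L[ℝ] E} {u : α → E} (hf : MemLp f r μ) (hu : MemLp u q μ) :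
    ‖∫ s, f s (u s) ∂μ‖ ≤ (eLpNorm f r μ).toReal * (eLpNorm u q μ).toReal :=
  (norm_integral_le_integral_norm _).trans (aux_integral_norm_apply_le hqr hf hu)

/-- Dominated convergence for the `L^p` seminorm. -/
private lemma aux_tendsto_eLpNorm_zero {p : ℝ≥0∞} (hp0 : p ≠ 0) (hp : p ≠ ∞)
    {F : ℕ → α → E} {bound : α → ℝ} (hF : ∀ n, AEStronglyMeasurable (F n) μ)
    (hbound : MemLp bound p μ)
    (hle : ∀ n, ∀ᵐ t ∂μ, ‖F n t‖ ≤ bound t)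
    (hlim : ∀ᵐ t ∂μ, Tendsto (fun n => F n t) atTop (𝓝 0)) :
    Tendsto (fun n => eLpNorm (F n) p μ) atTop (𝓝 0) := by
  have hpR : 0 < p.toReal := ENNReal.toReal_pos hp0 hp
  have hkey : Tendsto (fun n => ∫⁻ t, (‖F n t‖₊ : ℝ≥0∞) ^ p.toReal ∂μ) atTop (𝓝 0) := by
    have h0 : (0 : ℝ≥0∞) = ∫⁻ _, (0 : ℝ≥0∞) ∂μ := by simp
    rw [h0]
    refine tendsto_lintegral_of_dominated_convergence'
      (bound := fun t => (‖bound t‖₊ : ℝ≥0∞) ^ p.toReal) ?_ ?_ ?_ ?_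
    · intro n
      exact (hF n).enorm.pow_const _
    · intro n
      filter_upwards [hle n] with t ht
      refine ENNReal.rpow_le_rpow ?_ hpR.le
      have h1 : ‖F n t‖ ≤ ‖bound t‖ := ht.trans (le_abs_self _)
      exact_mod_cast (by simpa using h1 : (‖F n t‖₊ : ℝ) ≤ (‖bound t‖₊ : ℝ))
    · have h2 := hbound.2
      rw [eLpNorm_eq_lintegral_rpow_enorm_toReal hp0 hp,
        ENNReal.rpow_lt_top_iff_of_pos (by positivity : (0:ℝ) < 1 / p.toReal)] at h2
      exact h2.ne
    · filter_upwards [hlim] with t ht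
      have h1 : Tendsto (fun n => (‖F n t‖₊ : ℝ≥0∞)) atTop (𝓝 0) := by
        rw [← ENNReal.coe_zero]
        refine ENNReal.tendsto_coe.mpr ?_
        have := (continuous_nnnorm.tendsto (0 : E)).comp ht
        simpa [Function.comp_def] using this
      have h2 := (ENNReal.continuous_rpow_const (y := p.toReal)).tendsto 0 |>.comp h1
      simpa [Function.comp_def, ENNReal.zero_rpow_of_pos hpR] using h2
  simp_rw [eLpNorm_eq_lintegral_rpow_enorm_toReal hp0 hp]
  have h2 := (ENNReal.continuous_rpow_const (y := 1 / p.toReal)).tendsto 0 |>.comp hkey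
  simpa [Function.comp_def, one_div, enorm_eq_nnnorm,
    ENNReal.zero_rpow_of_pos (by positivity : (0:ℝ) < p.toReal⁻¹)] using h2

/-- Weak convergence together with total boundedness of the range gives norm convergence. -/
private lemma aux_tendsto_of_dual_of_totallyBounded [CompleteSpace E]
    {a : ℕ → E} {b : E} {S : Set E}
    (hS : TotallyBounded S) (ha : ∀ n, a n ∈ S)
    (hw : ∀ φ : E →L[ℝ] ℝ, Tendsto (fun n => φ (a n)) atTop (𝓝 (φ b))) :
    Tendsto a atTop (𝓝 b) := by
  apply tendsto_of_subseq_tendsto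
  intro ns hns
  have hK : IsCompact (closure S) :=
    hS.closure.isCompact_of_isClosed isClosed_closure
  obtain ⟨x, -, ms, hms, hx⟩ :=
    hK.tendsto_subseq (x := fun n => a (ns n)) (fun n => subset_closure (ha (ns n)))
  refine ⟨ms, ?_⟩
  have hxb : x = b := by
    apply (NormedSpace.eq_iff_forall_dual_eq ℝ).mpr
    intro φ
    have h1 : Tendsto (fun i => φ (a (ns (ms i)))) atTop (𝓝 (φ x)) :=
      (φ.continuous.tendsto x).comp hx
    have h2 : Tendsto (fun i => φ (a (ns (ms i)))) atTop (𝓝 (φ b)) :=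
      (hw φ).comp (hns.comp hms.tendsto_atTop)
    exact tendsto_nhds_unique h1 h2
  subst hxb
  simpa [Function.comp_def] using hx

/-- The set of integrals `∫ f·u` over functions `u` taking values a.e. in a compact set is
totally bounded. -/
private lemma aux_totallyBounded_integrals [CompleteSpace E] [IsFiniteMeasure μ]
    {f : α → E →L[ℝ] E} (hf : MemLp f 1 μ)
    {C : Set E} (hC : IsCompact C) (hCne : C.Nonempty) {M : ℝ} (hM0 : 0 ≤ M)
    (hM : ∀ x ∈ C, ‖x‖ ≤ M) :
    TotallyBounded {x : E | ∃ u : α → E, AEStronglyMeasurable u μ ∧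
      (∀ᵐ s ∂μ, u s ∈ C) ∧ x = ∫ s, f s (u s) ∂μ} := by
  classical
  have hcch : IsCompact (closedConvexHull ℝ C) := by
    rw [closedConvexHull_eq_closure_convexHull]
    exact TotallyBounded.isCompact_of_isClosed
      (totallyBounded_convexHull.mpr hC.totallyBounded).closure isClosed_closure
  rw [Metric.totallyBounded_iff]
  intro ε hε
  have hδ : (0:ℝ) < ε / (2 * (M + 1)) := by positivity
  obtain ⟨g, hgclose, hgmem⟩ := hf.exists_simpleFunc_eLpNorm_sub_lt ENNReal.one_ne_top
    (ε := ENNReal.ofReal (ε / (2 * (M + 1)))) (by simp [hδ, not_le])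
  set T' := (μ Set.univ).toReal with hT'
  set D2 : Set E := (fun z : ℝ × E => z.1 • z.2) '' (Set.Icc 0 T' ×ˢ closedConvexHull ℝ C)
    with hD2
  have hD2comp : IsCompact D2 :=
    ((isCompact_Icc).prod hcch).image (continuous_fst.smul continuous_snd)
  set Φ : ({A // A ∈ g.range} → E) → E :=
    fun y => ∑ A : {A // A ∈ g.range}, (A : E →L[ℝ] E) (y A) with hΦ
  have hΦcont : Continuous Φ :=
    continuous_finset_sum _ fun A _ => (A : E →L[ℝ] E).continuous.comp (continuous_apply A)
  set K : Set E := Φ '' Set.univ.pi (fun _ => D2) with hK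
  have hKcomp : IsCompact K := (isCompact_univ_pi fun _ => hD2comp).image hΦcont
  obtain ⟨t, htfin, htcover⟩ :=
    (Metric.totallyBounded_iff.mp hKcomp.totallyBounded) (ε / 2) (by positivity)
  refine ⟨t, htfin, ?_⟩
  rintro x ⟨u, hum, huC, rfl⟩
  have huM : ∀ᵐ s ∂μ, ‖u s‖ ≤ M := huC.mono fun s hs => hM _ hs
  have hu1 : Integrable u μ := by
    rw [← memLp_one_iff_integrable]; exact MemLp.of_bound hum M huM
  have huinf : MemLp u ∞ μ := memLp_top_of_bound hum M huM
  have hfu : Integrable (fun s => f s (u s)) μ := aux_integrable_apply (by simp) hf huinf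
  have hgu : Integrable (fun s => g s (u s)) μ := aux_integrable_apply (by simp) hgmem huinf
  have hy : ∀ A : {A // A ∈ g.range},
      (∫ s in g ⁻¹' {(A : E →L[ℝ] E)}, u s ∂μ) ∈ D2 := by
    intro A
    by_cases h0 : μ (g ⁻¹' {(A : E →L[ℝ] E)}) = 0
    · have hz : ∫ s in g ⁻¹' {(A : E →L[ℝ] E)}, u s ∂μ = 0 := by
        rw [Measure.restrict_eq_zero.mpr h0, integral_zero_measure]
      rw [hz]
      obtain ⟨c, hc⟩ := hCne
      exact ⟨(0, c), ⟨⟨le_refl 0, ENNReal.toReal_nonneg⟩, subset_closedConvexHull hc⟩,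
        by simp⟩
    · have hfin : μ (g ⁻¹' {(A : E →L[ℝ] E)}) ≠ ∞ := measure_ne_top μ _
      have havg : (⨍ s in g ⁻¹' {(A : E →L[ℝ] E)}, u s ∂μ) ∈ closedConvexHull ℝ C :=
        (convex_closedConvexHull).set_average_mem isClosed_closedConvexHull h0 hfin
          (ae_restrict_of_ae (huC.mono fun s hs => subset_closedConvexHull hs))
          hu1.integrableOn
      refine ⟨((μ (g ⁻¹' {(A : E →L[ℝ] E)})).toReal,
        ⨍ s in g ⁻¹' {(A : E →L[ℝ] E)}, u s ∂μ),
        ⟨⟨ENNReal.toReal_nonneg, ?_⟩, havg⟩, ?_⟩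
      · exact ENNReal.toReal_mono (measure_ne_top μ _) (measure_mono (Set.subset_univ _))
      · exact measure_smul_setAverage _ hfin
  have hgK : (∫ s, g s (u s) ∂μ) ∈ K := by
    refine ⟨fun A => ∫ s in g ⁻¹' {(A : E →L[ℝ] E)}, u s ∂μ, fun A _ => hy A, ?_⟩
    have hdecomp : ∀ s, g s (u s) =
        ∑ A ∈ g.range, (g ⁻¹' {A}).indicator (fun s' => A (u s')) s := by
      intro s
      symm
      have h1 : ∀ A ∈ g.range, A ≠ g s →
          (⇑g ⁻¹' {A}).indicator (fun s' => A (u s')) s = 0 := by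
        intro A _ hA
        apply Set.indicator_of_notMem
        intro hmem
        exact hA (Set.mem_singleton_iff.mp hmem).symm
      rw [Finset.sum_eq_single_of_mem (g s) (SimpleFunc.mem_range_self g s) h1]
      exact Set.indicator_of_mem (show s ∈ ⇑g ⁻¹' {g s} from rfl)
        (fun s' => (g s) (u s'))
    have hstep : ∫ s, g s (u s) ∂μ
        = ∑ A ∈ g.range, A (∫ s in g ⁻¹' {A}, u s ∂μ) := by
      rw [integral_congr_ae (Eventually.of_forall hdecomp),
        integral_finset_sum _ (fun A _ =>
          ((A.integrable_comp hu1).indicator (g.measurableSet_fiber A)))]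
      refine Finset.sum_congr rfl fun A _ => ?_
      rw [integral_indicator (g.measurableSet_fiber A),
        ContinuousLinearMap.integral_comp_comm A hu1.integrableOn]
    simp only [Φ]
    rw [hstep]
    exact Finset.sum_coe_sort g.range
      (fun A => A (∫ s in g ⁻¹' {A}, u s ∂μ))
  have hdiff : ‖(∫ s, f s (u s) ∂μ) - ∫ s, g s (u s) ∂μ‖ ≤ ε / 2 := by
    rw [← integral_sub hfu hgu]
    have hfg1 : MemLp (f - ⇑g) 1 μ := hf.sub hgmem
    have hfgint : Integrable (f - ⇑g) μ := memLp_one_iff_integrable.mp hfg1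
    calc ‖∫ s, (f s (u s) - g s (u s)) ∂μ‖
        ≤ ∫ s, ‖f s (u s) - g s (u s)‖ ∂μ := norm_integral_le_integral_norm _
      _ ≤ ∫ s, ‖f s - g s‖ * M ∂μ := by
          refine integral_mono_ae (hfu.sub hgu).norm (hfgint.norm.mul_const M) ?_
          filter_upwards [huM] with s hs
          have h1 : f s (u s) - g s (u s) = (f s - g s) (u s) := by simp
          rw [h1]
          exact ((f s - g s).le_opNorm (u s)).trans
            (mul_le_mul_of_nonneg_left hs (norm_nonneg _))
      _ = (∫ s, ‖f s - g s‖ ∂μ) * M := integral_mul_const M _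
      _ ≤ (ε / (2 * (M + 1))) * M := by
          refine mul_le_mul_of_nonneg_right ?_ hM0
          have heq : ∫ s, ‖f s - g s‖ ∂μ = (eLpNorm (f - ⇑g) 1 μ).toReal := by
            rw [eLpNorm_one_eq_lintegral_enorm,
              ← integral_norm_eq_lintegral_enorm hfg1.1]
            simp [Pi.sub_apply]
          rw [heq]
          exact (ENNReal.toReal_lt_of_lt_ofReal hgclose).le
      _ ≤ ε / 2 := by
          have h1 : ε / (2 * (M + 1)) * M ≤ ε / (2 * (M + 1)) * (M + 1) :=
            mul_le_mul_of_nonneg_left (by linarith) hδ.le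
          have h2 : ε / (2 * (M + 1)) * (M + 1) = ε / 2 := by
            field_simp
          linarith
  obtain ⟨c, hc, hball⟩ := Set.mem_iUnion₂.mp (htcover hgK)
  refine Set.mem_iUnion₂.mpr ⟨c, hc, ?_⟩
  rw [Metric.mem_ball, dist_eq_norm]
  have h3 := Metric.mem_ball.mp hball
  rw [dist_eq_norm] at h3
  calc ‖(∫ s, f s (u s) ∂μ) - c‖
      ≤ ‖(∫ s, f s (u s) ∂μ) - ∫ s, g s (u s) ∂μ‖ + ‖(∫ s, g s (u s) ∂μ) - c‖ :=
        norm_sub_le_norm_sub_add_norm_sub _ _ _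
    _ < ε / 2 + ε / 2 := by linarith [hdiff]
    _ = ε := by ring

/-- Weak convergence in `L^q` implies weak convergence of the kernel integrals. -/
private lemma aux_weak_tendsto_integral [CompleteSpace E] {q r : ℝ≥0∞} [Fact (1 ≤ q)]
    (hqr : q⁻¹ + r⁻¹ = 1) {f : α → E →L[ℝ] E} (hf : MemLp f r μ)
    {wn : ℕ → Lp E q μ} {w : Lp E q μ}
    (hweak : ∀ φ : Lp E q μ →L[ℝ] ℝ, Tendsto (fun n => φ (wn n)) atTop (𝓝 (φ w)))
    (φ : E →L[ℝ] ℝ) :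
    Tendsto (fun n => φ (∫ s, f s ((wn n : α → E) s) ∂μ)) atTop
      (𝓝 (φ (∫ s, f s ((w : α → E) s) ∂μ))) := by
  have hint : ∀ u : Lp E q μ, Integrable (fun s => f s ((u : α → E) s)) μ :=
    fun u => aux_integrable_apply hqr hf (Lp.memLp u)
  let Φl : Lp E q μ →ₗ[ℝ] ℝ :=
    { toFun := fun u => ∫ s, φ (f s ((u : α → E) s)) ∂μ
      map_add' := fun u v => by
        have h1 : (fun s => φ (f s (((u + v : Lp E q μ) : α → E) s)))
            =ᵐ[μ] fun s => φ (f s ((u : α → E) s)) + φ (f s ((v : α → E) s)) := by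
          filter_upwards [Lp.coeFn_add u v] with s hs
          rw [hs]
          simp
        rw [integral_congr_ae h1,
          integral_add (φ.integrable_comp (hint u)) (φ.integrable_comp (hint v))]
      map_smul' := fun c u => by
        have h1 : (fun s => φ (f s (((c • u : Lp E q μ) : α → E) s)))
            =ᵐ[μ] fun s => c • φ (f s ((u : α → E) s)) := by
          filter_upwards [Lp.coeFn_smul c u] with s hs
          rw [hs]
          simp
        rw [integral_congr_ae h1, integral_smul]
        rfl }
  have hbound : ∀ u : Lp E q μ, ‖Φl u‖ ≤ (‖φ‖ * (eLpNorm f r μ).toReal) * ‖u‖ := by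
    intro u
    have h2 : ‖Φl u‖ ≤ ∫ s, ‖φ (f s ((u : α → E) s))‖ ∂μ := norm_integral_le_integral_norm _
    have h3 : ∫ s, ‖φ (f s ((u : α → E) s))‖ ∂μ ≤ ∫ s, ‖φ‖ * ‖f s ((u : α → E) s)‖ ∂μ :=
      integral_mono (φ.integrable_comp (hint u)).norm ((hint u).norm.const_mul _)
        (fun s => φ.le_opNorm _)
    rw [integral_const_mul] at h3
    have h4 := aux_integral_norm_apply_le hqr hf (Lp.memLp u)
    have h5 : ‖u‖ = (eLpNorm (u : α → E) q μ).toReal := Lp.norm_def u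
    have h6 : (0:ℝ) ≤ ‖φ‖ := norm_nonneg _
    calc ‖Φl u‖ ≤ ‖φ‖ * ∫ s, ‖f s ((u : α → E) s)‖ ∂μ := h2.trans h3
      _ ≤ ‖φ‖ * ((eLpNorm f r μ).toReal * (eLpNorm (u : α → E) q μ).toReal) :=
          mul_le_mul_of_nonneg_left h4 h6
      _ = (‖φ‖ * (eLpNorm f r μ).toReal) * ‖u‖ := by rw [h5]; ring
  let Φ : Lp E q μ →L[ℝ] ℝ := Φl.mkContinuous _ hbound
  have hrw : ∀ u : Lp E q μ, Φ u = φ (∫ s, f s ((u : α → E) s) ∂μ) := by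
    intro u
    exact ContinuousLinearMap.integral_comp_comm φ (hint u)
  have h7 := hweak Φ
  simp_rw [hrw] at h7
  exact h7

end Aux

/-- if `C ⊆ E` is norm-compact, the functions `wₙ ∈ L^q(I,E)` take values
a.e. in `C` and `wₙ ⇀ w` weakly in `L^q(I,E)`, then `K(wₙ) → K(w)` in the norm of `L^p(I,E)`,
where `K(w)(t) = h(t) + ∫₀ᵀ k(t,s) w(s) ds`. -/
theorem statement17 [CompleteSpace E]
    (T : ℝ) (hT : 0 < T) (p q r : ℝ≥0∞) [Fact (1 ≤ p)] [Fact (1 ≤ q)]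
    (hp : p ≠ ∞) (hq : q ≠ ∞) (hqp : q ≤ p) (hr : q⁻¹ + r⁻¹ = 1)
    (k : ℝ → ℝ → E →L[ℝ] E) (hk : CondK T k p r)
    (h : Lp E p (μI T))
    (C : Set E) (hC : IsCompact C)
    (wn : ℕ → Lp E q (μI T)) (hwn : ∀ n, ∀ᵐ t ∂(μI T), wn n t ∈ C)
    (w : Lp E q (μI T)) (hweak : WeakConv wn w) :
    Tendsto (fun n => eLpNorm (fun t =>
        (h t + ∫ s, (k t s) (wn n s) ∂(μI T)) - (h t + ∫ s, (k t s) (w s) ∂(μI T)))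
      p (μI T)) atTop (𝓝 0) := by
  classical
  obtain ⟨hk1, hk2, hk3⟩ := hk
  haveI : IsFiniteMeasure (μI T) :=
    ⟨by rw [Measure.restrict_apply_univ]; exact measure_Icc_lt_top⟩
  have hp0 : p ≠ 0 := (lt_of_lt_of_le zero_lt_one (Fact.out : 1 ≤ p)).ne'
  have hμ0 : μI T ≠ 0 := by
    intro h0
    have h1 : (μI T) Set.univ = ENNReal.ofReal T := by
      rw [Measure.restrict_apply_univ, Real.volume_Icc, sub_zero]
    rw [h0] at h1
    simp only [Measure.coe_zero, Pi.zero_apply] at h1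
    exact (ENNReal.ofReal_pos.mpr hT).ne' h1.symm
  have hCne : C.Nonempty := by
    rcases Set.eq_empty_or_nonempty C with hCe | hCne
    · exfalso
      have h1 := hwn 0
      rw [hCe] at h1
      simp only [Set.mem_empty_iff_false] at h1
      exact hμ0 (ae_eq_bot.mp (Filter.eventually_false_iff_eq_bot.mp h1))
    · exact hCne
  obtain ⟨M, hM⟩ := hC.isBounded.exists_norm_le
  have hM0 : 0 ≤ M := le_trans (norm_nonneg _) (hM _ hCne.choose_spec)
  have hr1 : 1 ≤ r := by
    rw [← ENNReal.inv_le_one]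
    calc r⁻¹ ≤ q⁻¹ + r⁻¹ := le_add_self
      _ = 1 := hr
  simp only [add_sub_add_left_eq_sub]
  -- a.e. membership of k t in L^r
  have hmemr : ∀ᵐ t ∂(μI T), MemLp (k t) r (μI T) := by
    filter_upwards [ae_restrict_mem measurableSet_Icc] with t ht using hk2 t ht
  -- measurability of the integrals as functions of t
  have hAn : ∀ u : Lp E q (μI T),
      AEStronglyMeasurable (fun t => ∫ s, k t s ((u : ℝ → E) s) ∂(μI T)) (μI T) := by
    intro u
    apply AEStronglyMeasurable.integral_prod_right'
      (f := fun z : ℝ × ℝ => k z.1 z.2 ((u : ℝ → E) z.2))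
    exact isBoundedBilinearMap_apply.continuous.comp_aestronglyMeasurable
      (hk1.prodMk ((Lp.aestronglyMeasurable u).comp_snd))
  -- pointwise convergence a.e.
  have hptwise : ∀ᵐ t ∂(μI T), Tendsto (fun n =>
      (∫ s, k t s (wn n s) ∂(μI T)) - ∫ s, k t s (w s) ∂(μI T)) atTop (𝓝 0) := by
    filter_upwards [hmemr] with t ht
    have hmem1 : MemLp (k t) 1 (μI T) := ht.mono_exponent hr1
    have htb := aux_totallyBounded_integrals hmem1 hC hCne hM0 hM
    have hconv : Tendsto (fun n => ∫ s, k t s (wn n s) ∂(μI T)) atTop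
        (𝓝 (∫ s, k t s (w s) ∂(μI T))) := by
      apply aux_tendsto_of_dual_of_totallyBounded htb
      · exact fun n => ⟨(wn n : ℝ → E), Lp.aestronglyMeasurable _, hwn n, rfl⟩
      · exact fun φ => aux_weak_tendsto_integral hr ht hweak φ
    exact tendsto_sub_nhds_zero_iff.mpr hconv
  -- uniform bound
  set BB : ℝ := ((μI T Set.univ) ^ q.toReal⁻¹).toReal * M with hBB
  set W : ℝ := (eLpNorm (w : ℝ → E) q (μI T)).toReal with hW
  have hbdd : ∀ n, ∀ᵐ t ∂(μI T),
      ‖(∫ s, k t s (wn n s) ∂(μI T)) - ∫ s, k t s (w s) ∂(μI T)‖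
        ≤ (BB + W) * (eLpNorm (k t) r (μI T)).toReal := by
    intro n
    filter_upwards [hmemr] with t ht
    have h1 := aux_norm_integral_apply_le hr ht (Lp.memLp (wn n))
    have h2 := aux_norm_integral_apply_le hr ht (Lp.memLp w)
    have h3 : (eLpNorm ((wn n : ℝ → E)) q (μI T)).toReal ≤ BB := by
      have h4 := eLpNorm_le_of_ae_bound (p := q) (μ := μI T)
        ((hwn n).mono fun t' ht' => hM _ ht')
      have h5 : ((μI T) Set.univ ^ q.toReal⁻¹) ≠ ∞ :=
        ENNReal.rpow_ne_top_of_nonneg (inv_nonneg.mpr ENNReal.toReal_nonneg)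
          (measure_ne_top _ _)
      calc (eLpNorm ((wn n : ℝ → E)) q (μI T)).toReal
          ≤ (((μI T) Set.univ ^ q.toReal⁻¹) * ENNReal.ofReal M).toReal :=
            ENNReal.toReal_mono (ENNReal.mul_ne_top h5 ENNReal.ofReal_ne_top) h4
        _ = BB := by rw [ENNReal.toReal_mul, ENNReal.toReal_ofReal hM0]
    have hg0 : (0:ℝ) ≤ (eLpNorm (k t) r (μI T)).toReal := ENNReal.toReal_nonneg
    calc ‖(∫ s, k t s (wn n s) ∂(μI T)) - ∫ s, k t s (w s) ∂(μI T)‖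
        ≤ ‖∫ s, k t s (wn n s) ∂(μI T)‖ + ‖∫ s, k t s (w s) ∂(μI T)‖ := norm_sub_le _ _
      _ ≤ (eLpNorm (k t) r (μI T)).toReal * BB + (eLpNorm (k t) r (μI T)).toReal * W :=
          add_le_add (h1.trans (mul_le_mul_of_nonneg_left h3 hg0)) h2
      _ = (BB + W) * (eLpNorm (k t) r (μI T)).toReal := by ring
  have hboundmem : MemLp (fun t => (BB + W) * (eLpNorm (k t) r (μI T)).toReal) p (μI T) :=
    hk3.const_mul (BB + W)
  exact aux_tendsto_eLpNorm_zero hp0 hp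
    (fun n => (hAn (wn n)).sub (hAn w)) hboundmem hbdd hptwise
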